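/- For every object a of the Weyl groupoid of a Cartan scheme with finite root system and every i ∈ I, one has w_I σ_i^a w_I = σ_{τ_I^a(i)}^{τ(a)}, where w_I denotes longest elements (at appropriate objects) and τ_I^a is the permutation with w_I(α_j) = −α_{τ_I^a(j)}. Moreover, τ_I^a is an involution constant on connected components of the Cartan scheme. -/

import Mathlib

set_option linter.unusedSectionVars false

/-- A Cartan scheme `C = C(I, A, (ρ_i), (C^a))`. -/
structure CartanScheme (I A : Type) [Fintype I] [DecidableEq I] [Fintype A] [Nonempty A] where
  ρ : I → A → A
  c : A → I → I → ℤ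
  ρ_invol : ∀ i a, ρ i (ρ i a) = a
  c_diag : ∀ a i, c a i i = 2
  c_offdiag_nonpos : ∀ a i j, i ≠ j → c a i j ≤ 0
  c_zero_symm : ∀ a i j, c a i j = 0 → c a j i = 0
  c_rho : ∀ a i j, c (ρ i a) i j = c a i j

namespace CartanScheme

variable {I A : Type} [Fintype I] [DecidableEq I] [Fintype A] [Nonempty A] [DecidableEq A]
variable (C : CartanScheme I A)

/-- The simple reflection `σ_i^a` as a map `ℤ^I → ℤ^I`, `σ_i^a(α_j) = α_j - c^a_{ij} α_i`. -/
def sigma (a : A) (i : I) : (I → ℤ) → (I → ℤ) :=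
  fun v k => v k - (if k = i then ∑ j, C.c a i j * v j else 0)

/-- Target object of the word `[i_1, …, i_k]` read at source object `a`:
`ρ_{i_1} ⋯ ρ_{i_k}(a)`. -/
def wordTarget (a : A) : List I → A
  | [] => a
  | i :: l => C.ρ i (wordTarget a l)

/-- The map `σ_{i_1} ⋯ σ_{i_k}^a : ℤ^I → ℤ^I` determined by a word with source `a`. -/
def wordMap (a : A) : List I → ((I → ℤ) → (I → ℤ))
  | [] => id
  | i :: l => C.sigma (C.wordTarget a l) i ∘ wordMap a l

theorem wordTarget_append (a : A) (l₁ l₂ : List I) :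
    C.wordTarget a (l₁ ++ l₂) = C.wordTarget (C.wordTarget a l₂) l₁ := by
  induction l₁ with
  | nil => rfl
  | cons i l ih => simp [wordTarget, ih]

theorem wordMap_append (a : A) (l₁ l₂ : List I) :
    C.wordMap a (l₁ ++ l₂) = C.wordMap (C.wordTarget a l₂) l₁ ∘ C.wordMap a l₂ := by
  induction l₁ with
  | nil => rfl
  | cons i l ih => simp [wordMap, ih, wordTarget_append, Function.comp_assoc]

/-- A morphism of the Weyl groupoid `W(C)`: a source object, a target object, and a map
`ℤ^I → ℤ^I` which is a composition of simple reflections along some word. -/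
@[ext]
structure Mor where
  src : A
  tgt : A
  toFun : (I → ℤ) → (I → ℤ)
  spec : ∃ l : List I, C.wordTarget src l = tgt ∧ C.wordMap src l = toFun

variable {C}

/-- A word realizes a morphism. -/
def Realizes (w : Mor C) (l : List I) : Prop :=
  C.wordTarget w.src l = w.tgt ∧ C.wordMap w.src l = w.toFun

variable (C)

/-- The identity morphism `id^a`. -/
def idMor (a : A) : Mor C := ⟨a, a, id, ⟨[], rfl, rfl⟩⟩

/-- The generator `σ_i^a ∈ Hom(a, ρ_i(a))`. -/
def genMor (i : I) (a : A) : Mor C :=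
  ⟨a, C.ρ i a, C.sigma a i, ⟨[i], rfl, Function.comp_id _⟩⟩

/-- The simple reflection with target `a`, i.e. `id^a σ_i = σ_i^{ρ_i(a)} ∈ Hom(ρ_i(a), a)`. -/
def sgen (a : A) (i : I) : Mor C :=
  { src := C.ρ i a, tgt := a, toFun := C.sigma (C.ρ i a) i,
    spec := ⟨[i], by simp [wordTarget, C.ρ_invol], Function.comp_id _⟩ }

variable {C}

/-- Composition `u ∘ v` (with `v` applied first); junk value `u` if not composable. -/
def Mor.comp (u v : Mor C) : Mor C :=
  if h : v.tgt = u.src then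
    { src := v.src, tgt := u.tgt, toFun := u.toFun ∘ v.toFun,
      spec := by
        obtain ⟨lu, hu1, hu2⟩ := u.spec
        obtain ⟨lv, hv1, hv2⟩ := v.spec
        refine ⟨lu ++ lv, ?_, ?_⟩
        · rw [C.wordTarget_append, hv1, h, hu1]
        · rw [C.wordMap_append, hv1, h, hu2, hv2] }
  else u

/-- Length of a morphism: minimal length of a realizing word. -/
noncomputable def len (w : Mor C) : ℕ := sInf {k | ∃ l : List I, Realizes w l ∧ l.length = k}

/-- A reduced decomposition. -/
def IsReduced (w : Mor C) (l : List I) : Prop := Realizes w l ∧ l.length = len w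

/-- The (right) weak order: `u ≤_R uv` iff `ℓ(uv) = ℓ(u) + ℓ(v)`. -/
def weakLe (u w : Mor C) : Prop :=
  ∃ v : Mor C, v.tgt = u.src ∧ w = u.comp v ∧ len w = len u + len v

/-- Membership in the parabolic subgroupoid `W_J(C)`. -/
def InParabolic (J : Set I) (w : Mor C) : Prop :=
  ∃ l : List I, (∀ i ∈ l, i ∈ J) ∧ Realizes w l

/-- Length with respect to the generators `σ_j`, `j ∈ J`. -/
noncomputable def lenPar (J : Set I) (w : Mor C) : ℕ :=
  sInf {k | ∃ l : List I, (∀ i ∈ l, i ∈ J) ∧ Realizes w l ∧ l.length = k}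

/-- The set of letters occurring in some reduced decomposition of `w`;
by the theorem on reduced decompositions this is the set `J(w)`. -/
def Jset (w : Mor C) : Set I := {i | ∃ l : List I, IsReduced w l ∧ i ∈ l}

variable (C)

/-- The set of real roots at the object `a`. -/
def roots (a : A) : Set (I → ℤ) :=
  {α | ∃ (b : A) (l : List I) (j : I),
    C.wordTarget b l = a ∧ α = C.wordMap b l (Pi.single j 1)}

/-- The set of positive (real) roots at `a`. -/
def posRoots (a : A) : Set (I → ℤ) := {α ∈ C.roots a | ∀ i, 0 ≤ α i}

/-- `R^re(C)` is a finite root system of type `C`: axioms (R1), (R2), (R4) and finiteness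
((R3) holds automatically for real roots). -/
def IsFRS : Prop :=
  (∀ a : A, (C.roots a).Finite) ∧
  (∀ (a : A) (α : I → ℤ), α ∈ C.roots a → (∀ i, 0 ≤ α i) ∨ (∀ i, α i ≤ 0)) ∧
  (∀ (a : A) (i : I) (α : I → ℤ), α ∈ C.roots a → (∃ z : ℤ, α = z • Pi.single i 1) →
    α = Pi.single i 1 ∨ α = -Pi.single i 1) ∧
  (∀ (a : A) (i j : I), i ≠ j →
    (fun x => C.ρ i (C.ρ j x))^[(C.roots a ∩
      {α | ∃ m n : ℕ, α = (m : ℤ) • Pi.single i 1 + (n : ℤ) • Pi.single j 1}).ncard] a = a)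

variable {C}

/-- `I_L(w)`: the set of simple reflections with target `w.tgt` below `w` in weak order. -/
def IL (w : Mor C) : Set I := {i | weakLe (sgen C w.tgt i) w}

/-- `m` is the longest element of `Hom(-,a) ∩ W_J(C)`, i.e. `w_J` at the object `a`. -/
def IsLongestPar (a : A) (J : Set I) (m : Mor C) : Prop :=
  m.tgt = a ∧ InParabolic J m ∧
    ∀ x : Mor C, x.tgt = a → InParabolic J x → weakLe x m

/-- `m` is the longest element `w_I` of `Hom(-,a)`. -/
def IsLongestAt (a : A) (m : Mor C) : Prop :=
  m.tgt = a ∧ ∀ x : Mor C, x.tgt = a → weakLe x m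

/-- `z` is the meet of `x` and `y` in `(Hom(-,a), ≤_R)`. -/
def IsMeet (a : A) (x y z : Mor C) : Prop :=
  z.tgt = a ∧ weakLe z x ∧ weakLe z y ∧
    ∀ t : Mor C, t.tgt = a → weakLe t x → weakLe t y → weakLe t z

/-- `z` is the join of `x` and `y` in `(Hom(-,a), ≤_R)`. -/
def IsJoin (a : A) (x y z : Mor C) : Prop :=
  z.tgt = a ∧ weakLe x z ∧ weakLe y z ∧
    ∀ t : Mor C, t.tgt = a → weakLe x t → weakLe y t → weakLe z t

/-- The left coset `u W_J(C) ⊆ Hom(-, u.tgt)`. -/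
def leftCoset (u : Mor C) (J : Set I) : Set (Mor C) :=
  {x | ∃ v : Mor C, InParabolic J v ∧ v.tgt = u.src ∧ x = u.comp v}

end CartanScheme

namespace CartanScheme

variable {I A : Type} [Fintype I] [DecidableEq I] [Fintype A] [Nonempty A] [DecidableEq A]
variable {C : CartanScheme I A}

/-- Linearity predicate for maps `ℤ^I → ℤ^I`. -/
def Lin (f : (I → ℤ) → (I → ℤ)) : Prop :=
  ∀ (z : ℤ) (u v : I → ℤ), f (u + z • v) = f u + z • f v

lemma lin_id : Lin (id : (I → ℤ) → (I → ℤ)) := fun _ _ _ => rfl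

lemma lin_sigma (a : A) (i : I) : Lin (C.sigma a i) := by
  intro z u v
  funext k
  simp only [sigma, Pi.add_apply, Pi.smul_apply, smul_eq_mul]
  split_ifs with h
  · have hs : ∑ j, C.c a i j * (u j + z * v j)
        = (∑ j, C.c a i j * u j) + z * ∑ j, C.c a i j * v j := by
      simp [mul_add, Finset.sum_add_distrib, Finset.mul_sum, mul_left_comm]
    rw [hs]; ring
  · ring

lemma lin_comp {f g : (I → ℤ) → (I → ℤ)} (hf : Lin f) (hg : Lin g) : Lin (f ∘ g) := by
  intro z u v
  simp only [Function.comp_apply, hg z u v, hf z (g u) (g v)]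

lemma lin_wordMap (l : List I) (b : A) : Lin (C.wordMap b l) := by
  induction l with
  | nil => exact lin_id
  | cons i l ih => exact lin_comp (lin_sigma _ _) ih

lemma lin_mor (w : Mor C) : Lin w.toFun := by
  obtain ⟨l, -, h2⟩ := w.spec
  rw [← h2]
  exact lin_wordMap l w.src

lemma lin_zero {f : (I → ℤ) → (I → ℤ)} (hf : Lin f) : f 0 = 0 := by
  simpa using hf (-1) 0 0

lemma lin_add {f : (I → ℤ) → (I → ℤ)} (hf : Lin f) (u v : I → ℤ) : f (u + v) = f u + f v := by
  simpa using hf 1 u v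

lemma lin_smul {f : (I → ℤ) → (I → ℤ)} (hf : Lin f) (z : ℤ) (v : I → ℤ) :
    f (z • v) = z • f v := by
  have h := hf z 0 v
  simpa [lin_zero hf] using h

lemma lin_neg {f : (I → ℤ) → (I → ℤ)} (hf : Lin f) (v : I → ℤ) : f (-v) = -f v := by
  have h := lin_smul hf (-1) v
  simpa using h

lemma lin_sub {f : (I → ℤ) → (I → ℤ)} (hf : Lin f) (u v : I → ℤ) : f (u - v) = f u - f v := by
  have h := hf (-1) u v
  simpa [sub_eq_add_neg] using h

lemma single_eq_iff {j m : I} : (Pi.single j (1:ℤ) : I → ℤ) = Pi.single m 1 → j = m := by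
  intro h
  by_contra hne
  have h2 := congrFun h j
  simp [Pi.single_apply, hne] at h2

lemma csum (b : A) (i m : I) : ∑ j, C.c b i j * (Pi.single m (1:ℤ) : I → ℤ) j = C.c b i m := by
  simp [Pi.single_apply, mul_ite]

lemma sigma_single (b : A) (i j : I) :
    C.sigma b i (Pi.single j 1) = Pi.single j 1 - C.c b i j • Pi.single i 1 := by
  funext k
  simp only [sigma, csum, Pi.sub_apply, Pi.smul_apply, smul_eq_mul, Pi.single_apply]
  split_ifs <;> simp_all

lemma sigma_sigma (a : A) (i : I) (v : I → ℤ) : C.sigma a i (C.sigma a i v) = v := by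
  funext k
  simp only [sigma, mul_sub, Finset.sum_sub_distrib, mul_ite, mul_zero, Finset.sum_ite_eq',
    Finset.mem_univ, if_true, C.c_diag]
  split_ifs with h <;> ring

lemma sigma_base (a : A) (i : I) : C.sigma (C.ρ i a) i = C.sigma a i := by
  funext v k
  simp [sigma, C.c_rho]

lemma lin_finsum {f : (I → ℤ) → (I → ℤ)} (hf : Lin f) (s : Finset I) (g : I → (I → ℤ)) :
    f (∑ j ∈ s, g j) = ∑ j ∈ s, f (g j) := by
  induction s using Finset.induction_on with
  | empty => simpa using lin_zero hf
  | insert _ _ hj ih => rw [Finset.sum_insert hj, Finset.sum_insert hj, lin_add hf, ih]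

lemma sum_single (v : I → ℤ) : ∑ j, v j • (Pi.single j (1:ℤ) : I → ℤ) = v := by
  have h : ∀ j, v j • (Pi.single j (1:ℤ) : I → ℤ) = Pi.single j (v j) := by
    intro j
    funext m
    simp [Pi.single_apply]
  simp_rw [h]
  exact Finset.univ_sum_single v

lemma lin_ext {f g : (I → ℤ) → (I → ℤ)} (hf : Lin f) (hg : Lin g)
    (h : ∀ j, f (Pi.single j 1) = g (Pi.single j 1)) : f = g := by
  funext v
  have hv := sum_single v
  calc f v = f (∑ j, v j • (Pi.single j (1:ℤ) : I → ℤ)) := by rw [hv]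
    _ = ∑ j, f (v j • (Pi.single j (1:ℤ) : I → ℤ)) := lin_finsum hf _ _
    _ = ∑ j, v j • f (Pi.single j 1) := by simp_rw [lin_smul hf]
    _ = ∑ j, v j • g (Pi.single j 1) := by simp_rw [h]
    _ = ∑ j, g (v j • (Pi.single j (1:ℤ) : I → ℤ)) := by simp_rw [lin_smul hg]
    _ = g (∑ j, v j • (Pi.single j (1:ℤ) : I → ℤ)) := (lin_finsum hg _ _).symm
    _ = g v := by rw [hv]

lemma rev (l : List I) : ∀ b : A, C.wordTarget (C.wordTarget b l) l.reverse = b ∧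
    C.wordMap (C.wordTarget b l) l.reverse ∘ C.wordMap b l = id ∧
    C.wordMap b l ∘ C.wordMap (C.wordTarget b l) l.reverse = id := by
  induction l with
  | nil => exact fun b => ⟨rfl, rfl, rfl⟩
  | cons i l ih =>
    intro b
    obtain ⟨ih1, ih2, ih3⟩ := ih b
    have hT : C.wordTarget b (i :: l) = C.ρ i (C.wordTarget b l) := rfl
    have hρ : C.ρ i (C.wordTarget b (i :: l)) = C.wordTarget b l := by
      rw [hT, C.ρ_invol]
    have htgt1 : C.wordTarget (C.wordTarget b (i :: l)) [i] = C.wordTarget b l := by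
      simpa [wordTarget] using hρ
    have hmap : C.wordMap (C.wordTarget b (i :: l)) (i :: l).reverse
        = C.wordMap (C.wordTarget b l) l.reverse ∘ C.sigma (C.wordTarget b l) i := by
      have hone : C.wordMap (C.wordTarget b (i :: l)) [i] = C.sigma (C.wordTarget b l) i := by
        show C.sigma (C.wordTarget (C.wordTarget b (i :: l)) []) i ∘ id = _
        rw [Function.comp_id]
        show C.sigma (C.ρ i (C.wordTarget b l)) i = _
        exact sigma_base _ _
      rw [List.reverse_cons, wordMap_append, htgt1, hone]
    refine ⟨?_, ?_, ?_⟩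
    · rw [List.reverse_cons, wordTarget_append, htgt1, ih1]
    · rw [hmap]
      funext v
      have h1 : C.wordMap b (i :: l) v = C.sigma (C.wordTarget b l) i (C.wordMap b l v) := rfl
      simp only [Function.comp_apply, id_eq, h1, sigma_sigma]
      exact congrFun ih2 v
    · rw [hmap]
      funext v
      simp only [Function.comp_apply, id_eq]
      show C.sigma (C.wordTarget b l) i (C.wordMap b l (C.wordMap (C.wordTarget b l) l.reverse (C.sigma (C.wordTarget b l) i v))) = v
      rw [show C.wordMap b l (C.wordMap (C.wordTarget b l) l.reverse (C.sigma (C.wordTarget b l) i v)) = C.sigma (C.wordTarget b l) i v from congrFun ih3 _, sigma_sigma]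

lemma comp_src {u v : Mor C} (h : v.tgt = u.src) : (u.comp v).src = v.src := by
  simp only [Mor.comp, dif_pos h]

lemma comp_tgt {u v : Mor C} (h : v.tgt = u.src) : (u.comp v).tgt = u.tgt := by
  simp only [Mor.comp, dif_pos h]

lemma comp_toFun {u v : Mor C} (h : v.tgt = u.src) : (u.comp v).toFun = u.toFun ∘ v.toFun := by
  simp only [Mor.comp, dif_pos h]

lemma len_exists (w : Mor C) : ∃ l, Realizes w l ∧ l.length = len w := by
  have hne : {k | ∃ l : List I, Realizes w l ∧ l.length = k}.Nonempty := by
    obtain ⟨l, h1, h2⟩ := w.spec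
    exact ⟨l.length, l, ⟨h1, h2⟩, rfl⟩
  exact Nat.sInf_mem hne

lemma len_le {w : Mor C} {l : List I} (h : Realizes w l) : len w ≤ l.length :=
  Nat.sInf_le ⟨l, h, rfl⟩

lemma len_zero_eq {w : Mor C} (h : len w = 0) : w.tgt = w.src ∧ w.toFun = id := by
  obtain ⟨l, ⟨h1, h2⟩, hl⟩ := len_exists w
  rw [h, List.length_eq_zero_iff] at hl
  subst hl
  exact ⟨h1.symm, h2.symm⟩

lemma len_one_eq {w : Mor C} (h : len w = 1) :
    ∃ k, w.tgt = C.ρ k w.src ∧ w.toFun = C.sigma w.src k := by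
  obtain ⟨l, ⟨h1, h2⟩, hl⟩ := len_exists w
  rw [h, List.length_eq_one_iff] at hl
  obtain ⟨k, rfl⟩ := hl
  refine ⟨k, h1.symm, ?_⟩
  rw [← h2]
  show C.sigma (C.wordTarget w.src []) k ∘ id = _
  rw [Function.comp_id]
  rfl

lemma sigma_ne_id (b : A) (i : I) : C.sigma b i ≠ id := by
  intro h
  have h2 := congrFun (congrFun h (Pi.single i 1)) i
  rw [sigma_single] at h2
  simp [Pi.single_apply, C.c_diag] at h2

lemma len_sgen (a : A) (i : I) : len (sgen C a i) = 1 := by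
  have hre : Realizes (sgen C a i) [i] := by
    constructor
    · show C.ρ i (C.wordTarget (C.ρ i a) []) = a
      exact C.ρ_invol i a
    · show C.sigma (C.wordTarget (C.ρ i a) []) i ∘ id = C.sigma (C.ρ i a) i
      exact Function.comp_id _
  have h1 := len_le hre
  simp only [List.length_cons, List.length_nil] at h1
  have h0 : len (sgen C a i) ≠ 0 := by
    intro h
    have := (len_zero_eq h).2
    exact sigma_ne_id _ _ this
  omega

lemma mor_inv {w : Mor C} {l : List I} (h : Realizes w l) :
    C.wordTarget w.tgt l.reverse = w.src ∧
    C.wordMap w.tgt l.reverse ∘ w.toFun = id ∧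
    w.toFun ∘ C.wordMap w.tgt l.reverse = id := by
  obtain ⟨h1, h2⟩ := h
  rw [← h1, ← h2]
  exact rev l w.src

lemma toFun_inj (w : Mor C) : Function.Injective w.toFun := by
  obtain ⟨l, hl⟩ := w.spec
  obtain ⟨-, h2, -⟩ := mor_inv (w := w) (l := l) hl
  intro x y hxy
  have hx := congrFun h2 x
  have hy := congrFun h2 y
  simp only [Function.comp_apply, id_eq] at hx hy
  rw [← hx, ← hy, hxy]

section Longest

variable (wL : A → Mor C) (hwL : ∀ b : A, IsLongestAt b (wL b)) (τI : A → I → I)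
  (hτ : ∀ (b : A) (j : I), (wL b).toFun (Pi.single j 1) = -Pi.single (τI b j) 1)

include hτ in
lemma tau_bij (b : A) : Function.Bijective (τI b) := by
  rw [← Finite.injective_iff_bijective]
  intro j j' hjj
  have h1 := hτ b j
  have h2 := hτ b j'
  rw [hjj, ← h2] at h1
  have h3 := toFun_inj (wL b) h1
  exact single_eq_iff h3

include hτ in
lemma no_drop (β b b' : A) (i : I) (h : (wL b').toFun = C.sigma β i ∘ (wL b).toFun) : False := by
  obtain ⟨j, hj⟩ := (tau_bij wL τI hτ b).2 i
  have h1 := congrFun h (Pi.single j 1)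
  rw [hτ b' j] at h1
  rw [Function.comp_apply, hτ b j, hj, lin_neg (lin_sigma β i), sigma_single, C.c_diag] at h1
  have h2 := congrFun h1 i
  simp [Pi.single_apply] at h2
  split_ifs at h2 <;> omega

include hwL in
lemma step (a : A) (i : I) : ∃ v : Mor C, v.src = (wL a).src ∧ v.tgt = C.ρ i a ∧
    v.toFun = C.sigma a i ∘ (wL a).toFun ∧ len (wL a) = 1 + len v := by
  obtain ⟨v, hvt, hco, hlen⟩ := (hwL a).2 (sgen C a i) rfl
  have hvt' : v.tgt = C.ρ i a := hvt
  have hsrc : (wL a).src = v.src := by rw [hco, comp_src hvt]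
  have hfun : (wL a).toFun = C.sigma a i ∘ v.toFun := by
    rw [hco, comp_toFun hvt]
    show (C.sigma (C.ρ i a) i) ∘ v.toFun = _
    rw [sigma_base]
  refine ⟨v, hsrc.symm, hvt', ?_, ?_⟩
  · funext x
    rw [hfun]
    simp only [Function.comp_apply, sigma_sigma]
  · rw [hlen, len_sgen]

include hwL hτ in
lemma neighbor (a : A) (i : I) :
    ∃ k, τI a k = i ∧ (wL (C.ρ i a)).src = C.ρ k ((wL a).src) ∧
      (∀ j, C.c ((wL a).src) k j = C.c a i (τI a j)) ∧
      τI (C.ρ i a) = τI a ∧ len (wL (C.ρ i a)) = len (wL a) := by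
  obtain ⟨v, hv1, hv2, hv3, hv4⟩ := step wL hwL a i
  obtain ⟨v', hv'1, hv'2, hv'3, hv'4⟩ := step wL hwL (C.ρ i a) i
  rw [C.ρ_invol] at hv'2
  obtain ⟨v₁, h1t, h1c, h1l⟩ := (hwL a).2 v' hv'2
  obtain ⟨v₂, h2t, h2c, h2l⟩ := (hwL (C.ρ i a)).2 v hv2
  have hfun1 : (wL a).toFun = v'.toFun ∘ v₁.toFun := by rw [h1c, comp_toFun h1t]
  have hsrc1 : (wL a).src = v₁.src := by rw [h1c, comp_src h1t]
  have hne1 : len v₁ ≠ 0 := by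
    intro h0
    obtain ⟨-, hid⟩ := len_zero_eq h0
    apply no_drop wL τI hτ (C.ρ i a) (C.ρ i a) a i
    rw [hfun1, hid, Function.comp_id, hv'3]
  have hne2 : len v₂ ≠ 0 := by
    intro h0
    obtain ⟨-, hid⟩ := len_zero_eq h0
    apply no_drop wL τI hτ a a (C.ρ i a) i
    rw [h2c, comp_toFun h2t, hid, Function.comp_id, hv3]
  have hl1 : len v₁ = 1 := by omega
  obtain ⟨k, hk1, hk2⟩ := len_one_eq hl1
  have hksrc : (wL (C.ρ i a)).src = C.ρ k ((wL a).src) := by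
    rw [← hv'1, ← h1t, hk1, ← hsrc1]
  have H : (wL a).toFun
      = C.sigma a i ∘ ((wL (C.ρ i a)).toFun ∘ C.sigma ((wL a).src) k) := by
    rw [hfun1, hv'3, hk2, ← hsrc1, sigma_base, Function.comp_assoc]
  have valH : ∀ j : I, -(Pi.single (τI a j) 1 : I → ℤ)
      = C.sigma a i ((wL (C.ρ i a)).toFun (C.sigma ((wL a).src) k (Pi.single j 1))) := by
    intro j
    have h := congrFun H (Pi.single j 1)
    rw [hτ a j] at h
    simpa using h
  have hargk : C.sigma ((wL a).src) k (Pi.single k 1) = -Pi.single k 1 := by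
    rw [sigma_single, C.c_diag]
    funext m
    simp only [Pi.sub_apply, Pi.smul_apply, Pi.neg_apply, smul_eq_mul, Pi.single_apply]
    split_ifs <;> ring
  have hA := valH k
  rw [hargk, lin_neg (lin_mor _), hτ, neg_neg, sigma_single] at hA
  have hπk : τI (C.ρ i a) k = i := by
    by_contra hne
    have h2 := congrFun hA (τI (C.ρ i a) k)
    simp [Pi.single_apply, hne] at h2
    split_ifs at h2 <;> omega
  have hσk : τI a k = i := by
    rw [hπk, C.c_diag] at hA
    by_contra hne
    have h2 := congrFun hA (τI a k)
    simp [Pi.single_apply, hne] at h2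
  have hB : ∀ j, τI (C.ρ i a) j = τI a j ∧ C.c ((wL a).src) k j = C.c a i (τI (C.ρ i a) j) := by
    intro j
    by_cases hjk : j = k
    · subst hjk
      exact ⟨by rw [hπk, hσk], by rw [hπk, C.c_diag, C.c_diag]⟩
    · have hπne : τI (C.ρ i a) j ≠ i := by
        intro h
        exact hjk ((tau_bij wL τI hτ (C.ρ i a)).1 (by rw [h, hπk]))
      have hAj := valH j
      rw [sigma_single, lin_sub (lin_mor _), lin_smul (lin_mor _), hτ, hτ, hπk] at hAj
      have harg2 : (-Pi.single (τI (C.ρ i a) j) 1 - C.c ((wL a).src) k j • (-Pi.single i 1) : I → ℤ)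
          = -Pi.single (τI (C.ρ i a) j) 1 + C.c ((wL a).src) k j • Pi.single i 1 := by
        funext m
        simp only [Pi.sub_apply, Pi.add_apply, Pi.smul_apply, Pi.neg_apply, smul_eq_mul]
        ring
      rw [harg2, (lin_sigma a i) (C.c ((wL a).src) k j) _ _, lin_neg (lin_sigma a i),
        sigma_single, sigma_single, C.c_diag] at hAj
      have heq : τI (C.ρ i a) j = τI a j := by
        by_contra hne
        have h2 := congrFun hAj (τI (C.ρ i a) j)
        simp [Pi.single_apply, hπne, hne] at h2
      have hσne : τI a j ≠ i := by rw [← heq]; exact hπne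
      constructor
      · exact heq
      · have h2 := congrFun hAj i
        simp [Pi.single_apply, Ne.symm hπne, Ne.symm hσne] at h2
        omega
  refine ⟨k, hσk, hksrc, ?_, ?_, ?_⟩
  · intro j
    have hb := hB j
    rw [hb.2, (hb.1)]
  · funext j
    exact (hB j).1
  · omega

include hwL hτ in
lemma const_word (l : List I) : ∀ b : A, τI (C.wordTarget b l) = τI b ∧
    len (wL (C.wordTarget b l)) = len (wL b) := by
  induction l with
  | nil => exact fun b => ⟨rfl, rfl⟩
  | cons i l ih =>
    intro b
    obtain ⟨k, -, -, -, h4, h5⟩ := neighbor wL hwL τI hτ (C.wordTarget b l) i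
    refine ⟨?_, ?_⟩
    · show τI (C.ρ i (C.wordTarget b l)) = τI b
      rw [h4, (ih b).1]
    · show len (wL (C.ρ i (C.wordTarget b l))) = len (wL b)
      rw [h5, (ih b).2]

include hwL hτ in
lemma const_mor (w : Mor C) : τI w.tgt = τI w.src ∧ len (wL w.tgt) = len (wL w.src) := by
  obtain ⟨l, h1, -⟩ := w.spec
  rw [← h1]
  exact const_word wL hwL τI hτ l w.src

include hwL hτ in
lemma doubletau (a : A) : (wL ((wL a).src)).src = a ∧
    (wL ((wL a).src)).toFun ∘ (wL a).toFun = id ∧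
    (wL a).toFun ∘ (wL ((wL a).src)).toFun = id := by
  obtain ⟨l, hre, hlen⟩ := len_exists (wL a)
  have hinv := mor_inv hre
  have hta : (wL a).tgt = a := (hwL a).1
  set g := C.wordMap (wL a).tgt l.reverse with hg
  have wInvSpec : ∃ l' : List I, C.wordTarget (wL a).tgt l' = (wL a).src ∧
      C.wordMap (wL a).tgt l' = g := ⟨l.reverse, hinv.1, rfl⟩
  set wInv : Mor C := ⟨(wL a).tgt, (wL a).src, g, wInvSpec⟩ with hwInv
  have hr1 : Realizes wInv l.reverse := ⟨hinv.1, rfl⟩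
  have hle : len wInv ≤ len (wL a) := by
    have h := len_le hr1
    simpa [List.length_reverse, hlen] using h
  obtain ⟨l₂, hre2, hlen2⟩ := len_exists wInv
  have hinv2 := mor_inv hre2
  have hreal : Realizes (wL a) l₂.reverse := by
    constructor
    · show C.wordTarget (wL a).src l₂.reverse = (wL a).tgt
      have := hinv2.1
      simpa using this
    · show C.wordMap (wL a).src l₂.reverse = (wL a).toFun
      have h1 : C.wordMap wInv.tgt l₂.reverse ∘ wInv.toFun = id := hinv2.2.1
      have h2 : wInv.toFun ∘ (wL a).toFun = id := hinv.2.1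
      have h3 : (wL a).toFun ∘ wInv.toFun = id := hinv.2.2
      funext x
      have e1 := congrFun h1 ((wL a).toFun x)
      have e2 := congrFun h2 x
      simp only [Function.comp_apply, id_eq] at e1 e2
      rw [e2] at e1
      exact e1
  have hge : len (wL a) ≤ len wInv := by
    have h := len_le hreal
    simpa [List.length_reverse, hlen2] using h
  have hLt : len (wL ((wL a).src)) = len (wL a) := by
    have h := (const_mor wL hwL τI hτ (wL a)).2
    rw [hta] at h
    exact h.symm
  obtain ⟨v, hvt, hvc, hvl⟩ := (hwL ((wL a).src)).2 wInv rfl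
  have hv0 : len v = 0 := by omega
  obtain ⟨hv1, hv2⟩ := len_zero_eq hv0
  have hsrc : (wL ((wL a).src)).src = a := by
    rw [hvc, comp_src hvt, ← hv1, hvt]
    show wInv.src = a
    rw [hwInv]
    exact hta
  have hfun : (wL ((wL a).src)).toFun = wInv.toFun := by
    rw [hvc, comp_toFun hvt, hv2, Function.comp_id]
  refine ⟨hsrc, ?_, ?_⟩
  · rw [hfun]; exact hinv.2.1
  · rw [hfun]; exact hinv.2.2

include hwL hτ in
lemma tau_tau (a : A) : τI ((wL a).src) = τI a := by
  have h := (const_mor wL hwL τI hτ (wL a)).1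
  rw [(hwL a).1] at h
  exact h.symm

include hwL hτ in
lemma tau_sq (a : A) (j : I) : τI a (τI a j) = j := by
  have hd := doubletau wL hwL τI hτ a
  have h := congrFun hd.2.2 (Pi.single j 1)
  simp only [Function.comp_apply, id_eq] at h
  rw [hτ, tau_tau wL hwL τI hτ, lin_neg (lin_mor _), hτ, neg_neg] at h
  exact single_eq_iff h

end Longest

end CartanScheme

variable {I A : Type} [Fintype I] [DecidableEq I] [Fintype A] [Nonempty A] [DecidableEq A]

open CartanScheme


/-- `w_I σ_i^a w_I = σ_{τ_I^a(i)}^{τ(a)}`, where `τ(b)` is the source of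
the longest element at `b` and `τ_I^b` is the permutation with `w_I(α_j) = -α_{τ_I^b(j)}`;
moreover `τ_I^a` is an involution and is constant on connected components. -/
theorem longest_conjugation_of_generator (C : CartanScheme I A) (hC : C.IsFRS)
    (wL : A → Mor C) (hwL : ∀ b : A, IsLongestAt b (wL b))
    (τI : A → I → I)
    (hτ : ∀ (b : A) (j : I), (wL b).toFun (Pi.single j 1) = -Pi.single (τI b j) 1) :
    (∀ (a : A) (i : I),
      (wL ((wL (C.ρ i a)).src)).comp ((genMor C i a).comp (wL a))
        = genMor C (τI a i) ((wL a).src)) ∧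
    (∀ a : A, τI ((wL a).src) ∘ τI a = id) ∧
    (∀ a b : A, (∃ w : Mor C, w.src = b ∧ w.tgt = a) → τI a = τI b) := by
  refine ⟨?_, ?_, ?_⟩
  · intro a i
    obtain ⟨k, hk1, hk2, hk3, hk4, -⟩ := neighbor wL hwL τI hτ a i
    have hsq := tau_sq wL hwL τI hτ a
    have hkσ : k = τI a i := by rw [← hk1, hsq k]
    subst hkσ
    have hbsrc : (wL ((wL (C.ρ i a)).src)).src = C.ρ i a :=
      (doubletau wL hwL τI hτ (C.ρ i a)).1
    have hτb : τI ((wL (C.ρ i a)).src) = τI a := by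
      rw [tau_tau wL hwL τI hτ (C.ρ i a), hk4]
    have hia : (wL a).tgt = (genMor C i a).src := (hwL a).1
    have hob : ((genMor C i a).comp (wL a)).tgt = (wL ((wL (C.ρ i a)).src)).src := by
      rw [comp_tgt hia, hbsrc]
      rfl
    apply Mor.ext
    · rw [comp_src hob, comp_src hia]
      rfl
    · rw [comp_tgt hob, (hwL _).1, hk2]
      rfl
    · rw [comp_toFun hob, comp_toFun hia]
      show (wL _).toFun ∘ ((genMor C i a).toFun ∘ (wL a).toFun)
          = C.sigma ((wL a).src) (τI a i)
      have hgf : (genMor C i a).toFun = C.sigma a i := rfl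
      rw [hgf]
      apply lin_ext (lin_comp (lin_mor _) (lin_comp (lin_sigma _ _) (lin_mor _)))
        (lin_sigma _ _)
      intro j
      simp only [Function.comp_apply]
      rw [hτ a j, lin_neg (lin_sigma a i), sigma_single, lin_neg (lin_mor _),
        lin_sub (lin_mor _), lin_smul (lin_mor _), hτ, hτ, hτb, hsq, sigma_single, hk3]
      funext m
      simp only [Pi.sub_apply, Pi.neg_apply, Pi.smul_apply, smul_eq_mul, Pi.single_apply]
      ring
  · intro a
    funext j
    simp only [Function.comp_apply, id_eq]
    rw [tau_tau wL hwL τI hτ a]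
    exact tau_sq wL hwL τI hτ a j
  · rintro a b ⟨w, rfl, rfl⟩
    exact (const_mor wL hwL τI hτ w).1
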